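/- Let A be an ℕ-graded k-algebra generated in degrees 0 and 1, and let U be a graded subalgebra of A (a unital subalgebra with U = ⊕_j U_j, where U_j = U ∩ A_j) such that the k-span of A₀·U and the k-span of U·A₀ both equal A. If *₁ and *₂ are two 0-equivariant star products on A such that f *₁ b = f *₂ b for all f ∈ U₁ and all b ∈ U, then *₁ = *₂, i.e. a *₁ b = a *₂ b for all a, b ∈ A. (In other words, every 0-equivariant star product on A is uniquely determined by the k-linear maps b ↦ f * b − f b for f ∈ U₁, b ∈ U.) -/

import Mathlib

/-- A star product on an `ℕ`-graded `k`-algebra `A = ⊕ⱼ 𝒜 j`: an associative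
`k`-bilinear operation `mul : A → A → A` such that for `a ∈ 𝒜 m` and `b ∈ 𝒜 n`
the difference `mul a b - a * b` lies in `A_{<m+n} = ⊕_{j<m+n} 𝒜 j`. -/
structure StarProduct (k : Type*) {A : Type*} [Field k] [Ring A] [Algebra k A]
    (𝒜 : ℕ → Submodule k A) where
  mul : A → A → A
  add_left : ∀ a b c : A, mul (a + b) c = mul a c + mul b c
  add_right : ∀ a b c : A, mul a (b + c) = mul a b + mul a c
  smul_left : ∀ (r : k) (a b : A), mul (r • a) b = r • mul a b
  smul_right : ∀ (r : k) (a b : A), mul a (r • b) = r • mul a b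
  assoc : ∀ a b c : A, mul (mul a b) c = mul a (mul b c)
  lower : ∀ (m n : ℕ) (a b : A), a ∈ 𝒜 m → b ∈ 𝒜 n →
    mul a b - a * b ∈ ⨆ j < m + n, 𝒜 j

/-- A star product is `0`-equivariant if `a * h = ah` and `h * a = ha` for all
`h` of degree `0` and all `a`. -/
def StarProduct.ZeroEquivariant {k A : Type*} [Field k] [Ring A] [Algebra k A]
    {𝒜 : ℕ → Submodule k A} (s : StarProduct k 𝒜) : Prop :=
  ∀ h ∈ 𝒜 0, ∀ a : A, s.mul a h = a * h ∧ s.mul h a = h * a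

/-- Let `A` be an `ℕ`-graded `k`-algebra generated in degrees `0` and `1`, and let
`U` be a graded subalgebra of `A` such that the spans of `A₀·U` and of `U·A₀` are
all of `A`.  Then any two `0`-equivariant star products on `A` which agree on
pairs `(f, b)` with `f ∈ U₁ = U ∩ A₁` and `b ∈ U` are equal. -/
theorem zeroEquivariant_starProduct_ext_of_subalgebra
    {k A : Type*} [Field k] [Ring A] [Algebra k A]
    (𝒜 : ℕ → Submodule k A) [GradedAlgebra 𝒜]
    (hgen : Algebra.adjoin k ((𝒜 0 : Set A) ∪ (𝒜 1 : Set A)) = ⊤)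
    (U : Subalgebra k A)
    (hUgraded : Subalgebra.toSubmodule U = ⨆ j : ℕ, Subalgebra.toSubmodule U ⊓ 𝒜 j)
    (hleft : Submodule.span k {x : A | ∃ h ∈ 𝒜 0, ∃ u ∈ U, x = h * u} = ⊤)
    (hright : Submodule.span k {x : A | ∃ u ∈ U, ∃ h ∈ 𝒜 0, x = u * h} = ⊤)
    (s₁ s₂ : StarProduct k 𝒜)
    (h₁ : s₁.ZeroEquivariant) (h₂ : s₂.ZeroEquivariant)
    (hagree : ∀ f ∈ U, f ∈ 𝒜 1 → ∀ b ∈ U, s₁.mul f b = s₂.mul f b) :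
    ∀ a b : A, s₁.mul a b = s₂.mul a b := by
  classical
  -- trivial bilinearity consequences
  have z1l : ∀ b : A, s₁.mul 0 b = 0 := fun b => by
    simpa using s₁.smul_left 0 0 b
  have z2l : ∀ b : A, s₂.mul 0 b = 0 := fun b => by
    simpa using s₂.smul_left 0 0 b
  have z1r : ∀ a : A, s₁.mul a 0 = 0 := fun a => by
    simpa using s₁.smul_right 0 a 0
  have z2r : ∀ a : A, s₂.mul a 0 = 0 := fun a => by
    simpa using s₂.smul_right 0 a 0
  have sub1l : ∀ x y b : A, s₁.mul (x - y) b = s₁.mul x b - s₁.mul y b := by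
    intro x y b
    have hneg : s₁.mul (-y) b = -(s₁.mul y b) := by
      rw [← neg_one_smul k y, s₁.smul_left, neg_one_smul]
    rw [sub_eq_add_neg, s₁.add_left, hneg, ← sub_eq_add_neg]
  have sub2l : ∀ x y b : A, s₂.mul (x - y) b = s₂.mul x b - s₂.mul y b := by
    intro x y b
    have hneg : s₂.mul (-y) b = -(s₂.mul y b) := by
      rw [← neg_one_smul k y, s₂.smul_left, neg_one_smul]
    rw [sub_eq_add_neg, s₂.add_left, hneg, ← sub_eq_add_neg]
  -- the submodule of "good" left arguments
  let P : Submodule k A :=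
    { carrier := {a : A | ∀ b : A, s₁.mul a b = s₂.mul a b}
      add_mem' := fun {x y} hx hy b => by
        rw [s₁.add_left, s₂.add_left, hx b, hy b]
      zero_mem' := fun b => by rw [z1l b, z2l b]
      smul_mem' := fun c x hx b => by
        rw [s₁.smul_left, s₂.smul_left, hx b] }
  have memP : ∀ a : A, a ∈ P → ∀ b : A, s₁.mul a b = s₂.mul a b := fun a ha => ha
  have h0P : ∀ h ∈ 𝒜 0, h ∈ P := by
    intro h hh b
    rw [(h₁ h hh b).2, (h₂ h hh b).2]
  -- Lemma 1 : elements of U ∩ 𝒜 1 are good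
  have U1P : ∀ f, f ∈ U → f ∈ 𝒜 1 → f ∈ P := by
    intro f hfU hf1 b
    have hb : b ∈ Submodule.span k {x : A | ∃ u ∈ U, ∃ h ∈ 𝒜 0, x = u * h} := by
      rw [hright]; exact Submodule.mem_top
    induction hb using Submodule.span_induction with
    | mem x hx =>
      obtain ⟨u, hu, h, hh, rfl⟩ := hx
      have k1 : s₁.mul f (u * h) = s₁.mul f u * h := by
        conv_lhs => rw [← (h₁ h hh u).1]
        rw [← s₁.assoc, (h₁ h hh (s₁.mul f u)).1]
      have k2 : s₂.mul f (u * h) = s₂.mul f u * h := by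
        conv_lhs => rw [← (h₂ h hh u).1]
        rw [← s₂.assoc, (h₂ h hh (s₂.mul f u)).1]
      rw [k1, k2, hagree f hfU hf1 u hu]
    | zero => rw [z1r, z2r]
    | add x y _ _ ihx ihy => rw [s₁.add_right, s₂.add_right, ihx, ihy]
    | smul c x _ ih => rw [s₁.smul_right, s₂.smul_right, ih]
  -- Lemma 2 : all of 𝒜 1 is good
  have hMP : Submodule.span k
      {x : A | ∃ h ∈ 𝒜 0, ∃ u, u ∈ U ∧ u ∈ 𝒜 1 ∧ x = h * u} ≤ P := by
    rw [Submodule.span_le]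
    rintro x ⟨h, hh, u, huU, hu1, rfl⟩
    intro b
    have k1 : s₁.mul (h * u) b = h * s₁.mul u b := by
      conv_lhs => rw [← (h₁ h hh u).2]
      rw [s₁.assoc, (h₁ h hh (s₁.mul u b)).2]
    have k2 : s₂.mul (h * u) b = h * s₂.mul u b := by
      conv_lhs => rw [← (h₂ h hh u).2]
      rw [s₂.assoc, (h₂ h hh (s₂.mul u b)).2]
    rw [k1, k2, memP u (U1P u huU hu1) b]
  have hA1P : ∀ f ∈ 𝒜 1, f ∈ P := by
    have key : ∀ x : A,
        ((DirectSum.decompose 𝒜 x 1 : 𝒜 1) : A) ∈ Submodule.span k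
          {x : A | ∃ h ∈ 𝒜 0, ∃ u, u ∈ U ∧ u ∈ 𝒜 1 ∧ x = h * u} := by
      intro x
      have hx : x ∈ Submodule.span k {x : A | ∃ h ∈ 𝒜 0, ∃ u ∈ U, x = h * u} := by
        rw [hleft]; exact Submodule.mem_top
      induction hx using Submodule.span_induction with
      | mem w hw =>
        obtain ⟨h, hh, u, huU, rfl⟩ := hw
        have hu' : u ∈ ⨆ j : ℕ, Subalgebra.toSubmodule U ⊓ 𝒜 j := by
          rw [← hUgraded]; exact huU
        refine Submodule.iSup_induction (motive := fun v : A =>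
          ((DirectSum.decompose 𝒜 (h * v) 1 : 𝒜 1) : A) ∈ Submodule.span k
            {x : A | ∃ h ∈ 𝒜 0, ∃ u, u ∈ U ∧ u ∈ 𝒜 1 ∧ x = h * u})
          _ hu' (fun j v hv => ?_) ?_ (fun v w ihv ihw => ?_)
        · beta_reduce
          have hv2 : h * v ∈ 𝒜 j := by
            simpa using SetLike.mul_mem_graded hh hv.2
          by_cases hj : j = 1
          · subst hj
            rw [DirectSum.decompose_of_mem_same 𝒜 hv2]
            exact Submodule.subset_span ⟨h, hh, v, hv.1, hv.2, rfl⟩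
          · rw [DirectSum.decompose_of_mem_ne 𝒜 hv2 hj]
            exact Submodule.zero_mem _
        · beta_reduce
          simpa using Submodule.zero_mem _
        · beta_reduce at ihv ihw ⊢
          rw [mul_add, DirectSum.decompose_add]
          simpa using Submodule.add_mem _ ihv ihw
      | zero => simpa using Submodule.zero_mem _
      | add x y _ _ ihx ihy =>
        rw [DirectSum.decompose_add]
        simpa using Submodule.add_mem _ ihx ihy
      | smul c x _ ih =>
        rw [DirectSum.decompose_smul, DirectSum.smul_apply]
        simpa using Submodule.smul_mem _ c ih
    intro f hf
    have := key f
    rw [DirectSum.decompose_of_mem_same 𝒜 hf] at this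
    exact hMP this
  -- the spans T m, and closure properties
  have TL : ∀ (m : ℕ), ∀ h ∈ 𝒜 0, ∀ z ∈ Submodule.span k
      {x : A | ∃ f ∈ 𝒜 1, ∃ y ∈ 𝒜 m, x = f * y},
      h * z ∈ Submodule.span k {x : A | ∃ f ∈ 𝒜 1, ∃ y ∈ 𝒜 m, x = f * y} := by
    intro m h hh z hz
    induction hz using Submodule.span_induction with
    | mem x hx =>
      obtain ⟨f, hf, y, hy, rfl⟩ := hx
      rw [← mul_assoc]
      exact Submodule.subset_span
        ⟨h * f, by simpa using SetLike.mul_mem_graded hh hf, y, hy, rfl⟩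
    | zero => simpa using Submodule.zero_mem _
    | add x y _ _ ihx ihy => rw [mul_add]; exact Submodule.add_mem _ ihx ihy
    | smul c x _ ih => rw [mul_smul_comm]; exact Submodule.smul_mem _ c ih
  have TR : ∀ (m d : ℕ), ∀ w ∈ 𝒜 d, ∀ z ∈ Submodule.span k
      {x : A | ∃ f ∈ 𝒜 1, ∃ y ∈ 𝒜 m, x = f * y},
      z * w ∈ Submodule.span k {x : A | ∃ f ∈ 𝒜 1, ∃ y ∈ 𝒜 (m + d), x = f * y} := by
    intro m d w hw z hz
    induction hz using Submodule.span_induction with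
    | mem x hx =>
      obtain ⟨f, hf, y, hy, rfl⟩ := hx
      rw [mul_assoc]
      exact Submodule.subset_span ⟨f, hf, y * w, SetLike.mul_mem_graded hy hw, rfl⟩
    | zero => simpa using Submodule.zero_mem _
    | add x y _ _ ihx ihy => rw [add_mul]; exact Submodule.add_mem _ ihx ihy
    | smul c x _ ih => rw [smul_mul_assoc]; exact Submodule.smul_mem _ c ih
  -- every element of 𝒜 (m+1) is in the span of (𝒜 1) * (𝒜 m)
  have hAT : ∀ (m : ℕ), ∀ a ∈ 𝒜 (m + 1), a ∈ Submodule.span k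
      {x : A | ∃ f ∈ 𝒜 1, ∃ y ∈ 𝒜 m, x = f * y} := by
    have key : ∀ x : A, ∀ m : ℕ,
        ((DirectSum.decompose 𝒜 x (m + 1) : 𝒜 (m + 1)) : A) ∈ Submodule.span k
          {x : A | ∃ f ∈ 𝒜 1, ∃ y ∈ 𝒜 m, x = f * y} := by
      intro x
      have hx : x ∈ Subalgebra.toSubmodule
          (Algebra.adjoin k ((𝒜 0 : Set A) ∪ (𝒜 1 : Set A))) := by
        rw [hgen]; exact Submodule.mem_top
      rw [Algebra.adjoin_eq_span] at hx
      induction hx using Submodule.span_induction with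
      | mem w hw =>
        have hstruct : ∃ d, w ∈ 𝒜 d ∧ ∀ m : ℕ, d = m + 1 → w ∈ Submodule.span k
            {x : A | ∃ f ∈ 𝒜 1, ∃ y ∈ 𝒜 m, x = f * y} := by
          induction hw using Submonoid.closure_induction with
          | mem w hw' =>
            rcases hw' with h0 | h1
            · exact ⟨0, h0, fun m hm => absurd hm (by omega)⟩
            · refine ⟨1, h1, fun m hm => ?_⟩
              have hm0 : m = 0 := by omega
              subst hm0
              exact Submodule.subset_span
                ⟨w, h1, 1, SetLike.one_mem_graded 𝒜, (mul_one w).symm⟩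
          | one => exact ⟨0, SetLike.one_mem_graded 𝒜, fun m hm => absurd hm (by omega)⟩
          | mul w₁ w₂ hw₁ hw₂ ih₁ ih₂ =>
            obtain ⟨d₁, hd₁, H₁⟩ := ih₁
            obtain ⟨d₂, hd₂, H₂⟩ := ih₂
            refine ⟨d₁ + d₂, SetLike.mul_mem_graded hd₁ hd₂, fun m hm => ?_⟩
            cases d₁ with
            | zero =>
              have hw₁0 : w₁ ∈ 𝒜 0 := hd₁
              exact TL m w₁ hw₁0 w₂ (H₂ m (by omega))
            | succ j =>
              have := TR j d₂ w₂ hd₂ w₁ (H₁ j rfl)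
              rwa [show j + d₂ = m by omega] at this
        intro m
        obtain ⟨d, hd, H⟩ := hstruct
        by_cases hdm : d = m + 1
        · have : ((DirectSum.decompose 𝒜 w (m + 1) : 𝒜 (m + 1)) : A) = w := by
            subst hdm; exact DirectSum.decompose_of_mem_same 𝒜 hd
          rw [this]
          exact H m hdm
        · rw [DirectSum.decompose_of_mem_ne 𝒜 hd hdm]
          exact Submodule.zero_mem _
      | zero => intro m; simpa using Submodule.zero_mem _
      | add x y _ _ ihx ihy =>
        intro m
        rw [DirectSum.decompose_add]
        simpa using Submodule.add_mem _ (ihx m) (ihy m)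
      | smul c x _ ih =>
        intro m
        rw [DirectSum.decompose_smul, DirectSum.smul_apply]
        simpa using Submodule.smul_mem _ c (ih m)
    intro m a ha
    have := key a m
    rwa [DirectSum.decompose_of_mem_same 𝒜 ha] at this
  -- main induction on the degree of a
  have main : ∀ m : ℕ, ∀ a ∈ 𝒜 m, a ∈ P := by
    intro m
    induction m using Nat.strong_induction_on with
    | _ m IH =>
      cases m with
      | zero => exact fun a ha => h0P a ha
      | succ n =>
        intro a ha
        have haT := hAT n a ha
        clear ha
        induction haT using Submodule.span_induction with
        | mem x hx =>
          obtain ⟨f, hf, y, hy, rfl⟩ := hx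
          have he : s₁.mul f y - f * y ∈ ⨆ j, ⨆ (_ : j < 1 + n), 𝒜 j :=
            s₁.lower 1 n f y hf hy
          have heP : (s₁.mul f y - f * y) ∈ P := by
            refine (iSup_le fun j => iSup_le fun hj => ?_ :
              (⨆ j, ⨆ (_ : j < 1 + n), 𝒜 j) ≤ P) he
            exact fun x hx => IH j (by omega) x hx
          have hyP : ∀ b, s₁.mul y b = s₂.mul y b :=
            memP y (IH n (Nat.lt_succ_self n) y hy)
          have hfP : ∀ b, s₁.mul f b = s₂.mul f b := memP f (hA1P f hf)
          have he2 : f * y = s₂.mul f y - (s₁.mul f y - f * y) := by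
            rw [← hfP y]; exact (sub_sub_cancel _ _).symm
          have he1 : f * y = s₁.mul f y - (s₁.mul f y - f * y) :=
            (sub_sub_cancel _ _).symm
          intro b
          have l1 : s₁.mul (f * y) b
              = s₁.mul f (s₁.mul y b) - s₁.mul (s₁.mul f y - f * y) b := by
            conv_lhs => rw [he1]
            rw [sub1l, s₁.assoc]
          have l2 : s₂.mul (f * y) b
              = s₂.mul f (s₂.mul y b) - s₂.mul (s₁.mul f y - f * y) b := by
            conv_lhs => rw [he2]
            rw [sub2l, s₂.assoc]
          rw [l1, l2, hyP b, hfP (s₂.mul y b), memP _ heP b]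
        | zero => exact Submodule.zero_mem P
        | add x y _ _ ihx ihy => exact Submodule.add_mem P ihx ihy
        | smul c x _ ih => exact Submodule.smul_mem P c ih
  have top : (⊤ : Submodule k A) ≤ P := by
    rw [← DirectSum.IsInternal.submodule_iSup_eq_top
      (DirectSum.Decomposition.isInternal 𝒜)]
    exact iSup_le fun m => fun a ha => main m a ha
  intro a b
  exact memP a (top Submodule.mem_top) b
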